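/- Under the hypotheses of the context (the absorption probabilities s_k,…,s_n of the Markov chain M_k^2), if in addition n ≥ 3 and k ≤ n − √(n·log n) (log denoting the natural logarithm), then s_k ≥ 1 − 64r/((r−5)(r−1)·log n). -/

import Mathlib

set_option maxHeartbeats 8000000 in
/-- If moreover `n ≥ 3` and `k ≤ n - √(n·log n)`, then
`s_k ≥ 1 - 64r/((r-5)(r-1)·log n)` for the absorption probabilities of the Markov
chain `M_k^2`. -/
theorem sk_lower_bound_log (n k : ℕ) (hn : 2 ≤ n) (hk1 : 1 ≤ k) (hk2 : k ≤ n - 1)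
    (r : ℝ) (hr : 5 < r) (s : ℕ → ℝ)
    (hbound : ∀ i, k ≤ i → i ≤ n + 1 → 0 ≤ s i ∧ s i ≤ 1)
    (htop : s (n + 1) = 1)
    (hmono : ∀ i, k ≤ i → i < n → s i ≤ s (i + 1))
    (hfirst : s k ≥ (1 - 2 / ((n : ℝ) * (r - 1))) * s (k + 1))
    (hrec : ∀ i, k + 1 ≤ i → i ≤ n →
      s i = (r * i * ((n : ℝ) - i) / n * s (i + 1)
              + ((((i : ℝ) - k) * n + i * ((n : ℝ) - i)) / n) * s (i - 1)
              + r * ((i : ℝ) - k) / n)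
        / (r * i * ((n : ℝ) - i) / n
              + (((i : ℝ) - k) * n + i * ((n : ℝ) - i)) / n
              + r * ((i : ℝ) - k) / n))
    (hn3 : 3 ≤ n) (hkb : (k : ℝ) ≤ (n : ℝ) - Real.sqrt ((n : ℝ) * Real.log n)) :
    s k ≥ 1 - 64 * r / ((r - 5) * (r - 1) * Real.log n) := by
  have hr0 : (0:ℝ) < r := by linarith
  have hr1 : (0:ℝ) < r - 1 := by linarith
  have hr5 : (0:ℝ) < r - 5 := by linarith
  have hnR : (0:ℝ) < n := by exact_mod_cast (show 0 < n by omega)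
  set L : ℝ := Real.log n with hLdef
  -- L ≥ 1
  have hL1 : 1 ≤ L := by
    rw [hLdef, ← Real.log_exp 1]
    apply Real.log_le_log (Real.exp_pos 1)
    calc Real.exp 1 ≤ 2.7182818286 := (Real.exp_one_lt_d9).le
    _ ≤ (n:ℝ) := by
        have : (3:ℝ) ≤ n := by exact_mod_cast hn3
        linarith
  have hL0 : 0 < L := by linarith
  -- L ≤ n and 2L ≤ n
  have hLn : L ≤ (n:ℝ) := by
    have := Real.log_le_sub_one_of_pos hnR
    linarith
  have hLn2 : 2 * L ≤ (n:ℝ) := by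
    have hs : Real.sqrt n ^ 2 = (n:ℝ) := Real.sq_sqrt hnR.le
    have h1 : L = 2 * Real.log (Real.sqrt n) := by
      rw [hLdef, Real.log_sqrt hnR.le]; ring
    have h2 : Real.log (Real.sqrt n) ≤ Real.sqrt n - 1 :=
      Real.log_le_sub_one_of_pos (Real.sqrt_pos.mpr hnR)
    nlinarith [sq_nonneg (Real.sqrt n - 2)]
  -- n - k ≥ 2
  have hsq1 : 1 < Real.sqrt ((n:ℝ) * L) := by
    rw [show (1:ℝ) = Real.sqrt 1 by simp]
    apply Real.sqrt_lt_sqrt (by norm_num)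
    nlinarith
  have hkn2 : k + 2 ≤ n := by
    by_contra h
    have hkn : n ≤ k + 1 := by omega
    have : (n:ℝ) ≤ (k:ℝ) + 1 := by exact_mod_cast hkn
    nlinarith
  set M : ℕ := (n - k) / 2 with hMdef
  have hM1 : 1 ≤ M := by omega
  set m : ℕ := k + M with hmdef
  have hmn : m < n := by omega
  have hnk3M : n ≤ k + 3 * M := by omega
  -- epsilon
  set ε : ℝ := 2 / ((n:ℝ) * (r - 1)) with hεdef
  have hε0 : 0 ≤ ε := by positivity
  -- d
  set d : ℕ → ℝ := fun i => s (i + 1) - s i with hddef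
  have hd0 : ∀ i, k ≤ i → i ≤ n → 0 ≤ d i := by
    intro i h1 h2
    rcases eq_or_lt_of_le h2 with h | h
    · subst h
      have := (hbound i h1 (by omega)).2
      simp only [hddef, htop]
      linarith
    · have := hmono i h1 h
      simp only [hddef]; linarith
  -- the rearranged recurrence
  have hrel : ∀ i, k ≤ i → i < n →
      (((i:ℝ) + 1 - k) * n + ((i:ℝ) + 1) * ((n:ℝ) - ((i:ℝ)+1))) * d i
        = r * ((i:ℝ)+1) * ((n:ℝ) - ((i:ℝ)+1)) * d (i+1)
          + r * ((i:ℝ) + 1 - k) * (1 - s (i+1)) := by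
    intro i h1 h2
    have h := hrec (i+1) (by omega) (by omega)
    have hc : ((i+1 : ℕ) : ℝ) = (i:ℝ) + 1 := by push_cast; ring
    rw [show (i + 1 - 1 : ℕ) = i by omega, hc] at h
    have hik : (1:ℝ) ≤ (i:ℝ) + 1 - k := by
      have : (k:ℝ) ≤ i := by exact_mod_cast h1
      linarith
    have hin : (0:ℝ) ≤ (n:ℝ) - ((i:ℝ)+1) := by
      have : ((i:ℝ) + 1) ≤ n := by exact_mod_cast (show i + 1 ≤ n by omega)
      linarith
    have hi0 : (0:ℝ) ≤ (i:ℝ) + 1 := by positivity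
    have hden : 0 < r * ((i:ℝ)+1) * ((n:ℝ) - ((i:ℝ)+1)) / n
        + (((i:ℝ)+1 - k) * n + ((i:ℝ)+1) * ((n:ℝ) - ((i:ℝ)+1))) / n
        + r * ((i:ℝ)+1 - k) / n := by
      have hA : (0:ℝ) ≤ r * ((i:ℝ)+1) * ((n:ℝ) - ((i:ℝ)+1)) / n := by positivity
      have hB : (0:ℝ) ≤ (((i:ℝ)+1 - k) * n + ((i:ℝ)+1) * ((n:ℝ) - ((i:ℝ)+1))) / n := by
        apply div_nonneg _ hnR.le
        have : (0:ℝ) ≤ ((i:ℝ)+1 - k) * n := by positivity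
        nlinarith
      have hC : (0:ℝ) < r * ((i:ℝ)+1 - k) / n := by positivity
      linarith
    rw [eq_div_iff (ne_of_gt hden)] at h
    have hn0 : (n:ℝ) ≠ 0 := ne_of_gt hnR
    simp only [hddef]
    field_simp at h
    linarith [h]
  -- decay
  have hdecay : ∀ j, k ≤ j → 2 * (j + 1) ≤ n + k → d (j + 1) ≤ 5 / r * d j := by
    intro j h1 h2
    have hjn : j < n := by omega
    have h := hrel j h1 hjn
    have hJk : (1:ℝ) ≤ (j:ℝ) + 1 - k := by
      have : (k:ℝ) ≤ j := by exact_mod_cast h1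
      linarith
    have hJnk : (j:ℝ) + 1 - k ≤ (n:ℝ) - ((j:ℝ) + 1) := by
      have h2' : ((2 * (j+1) : ℕ) : ℝ) ≤ ((n + k : ℕ) : ℝ) := by exact_mod_cast h2
      push_cast at h2'
      linarith
    have hJn1 : (1:ℝ) ≤ (n:ℝ) - ((j:ℝ)+1) := by linarith
    have hk1' : (1:ℝ) ≤ (k:ℝ) := by exact_mod_cast hk1
    have hJ2 : (2:ℝ) ≤ (j:ℝ) + 1 := by linarith
    have hApos : 0 < r * ((j:ℝ)+1) * ((n:ℝ) - ((j:ℝ)+1)) :=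
      mul_pos (mul_pos hr0 (by linarith)) (by linarith)
    have hdj : 0 ≤ d j := hd0 j h1 (by omega)
    have hsj : 0 ≤ 1 - s (j+1) := by
      have := (hbound (j+1) (by omega) (by omega)).2
      linarith
    -- b_j ≤ (5/r) a_j, i.e. r * b_j ≤ 5 * a_j
    have key : ((j:ℝ) + 1 - k) * n ≤ 4 * (((j:ℝ)+1) * ((n:ℝ) - ((j:ℝ)+1))) := by
      rcases le_total ((n:ℝ)) (4 * ((j:ℝ)+1)) with hc | hc
      · have e1 : ((j:ℝ) + 1 - k) * n ≤ ((n:ℝ) - ((j:ℝ)+1)) * n :=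
          mul_le_mul_of_nonneg_right hJnk hnR.le
        have e2 : ((n:ℝ) - ((j:ℝ)+1)) * n ≤ ((n:ℝ) - ((j:ℝ)+1)) * (4 * ((j:ℝ)+1)) :=
          mul_le_mul_of_nonneg_left hc (by linarith)
        linarith [e1, e2]
      · have e1 : ((j:ℝ) + 1 - k) * n ≤ ((j:ℝ)+1) * n :=
          mul_le_mul_of_nonneg_right (by linarith) hnR.le
        have e2 : 0 ≤ ((j:ℝ)+1) * (3 * n - 4 * ((j:ℝ)+1)) :=
          mul_nonneg (by linarith) (by linarith)
        nlinarith [e1, e2]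
    have hmain : r * ((j:ℝ)+1) * ((n:ℝ) - ((j:ℝ)+1)) * d (j+1)
        ≤ (((j:ℝ) + 1 - k) * n + ((j:ℝ) + 1) * ((n:ℝ) - ((j:ℝ)+1))) * d j := by
      have h0 : 0 ≤ r * ((j:ℝ) + 1 - k) * (1 - s (j+1)) :=
        mul_nonneg (mul_nonneg hr0.le (by linarith)) hsj
      linarith
    -- combine: a * d(j+1) ≤ b * d j ≤ (5/r) * a * d j
    have hbd : (((j:ℝ) + 1 - k) * n + ((j:ℝ) + 1) * ((n:ℝ) - ((j:ℝ)+1))) * d j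
        ≤ 5 / r * (r * ((j:ℝ)+1) * ((n:ℝ) - ((j:ℝ)+1))) * d j := by
      apply mul_le_mul_of_nonneg_right _ hdj
      rw [div_mul_eq_mul_div, le_div_iff₀ hr0]
      nlinarith [key]
    have := le_trans hmain hbd
    calc d (j+1) = (r * ((j:ℝ)+1) * ((n:ℝ) - ((j:ℝ)+1)) * d (j+1)) / (r * ((j:ℝ)+1) * ((n:ℝ) - ((j:ℝ)+1))) := by
          field_simp
      _ ≤ (5 / r * (r * ((j:ℝ)+1) * ((n:ℝ) - ((j:ℝ)+1))) * d j) / (r * ((j:ℝ)+1) * ((n:ℝ) - ((j:ℝ)+1))) :=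
          (div_le_div_iff_of_pos_right hApos).mpr this
      _ = 5 / r * d j := by field_simp
  -- geometric bound
  have hx0 : (0:ℝ) ≤ 5 / r := by positivity
  have hx1 : 5 / r ≤ 1 := by
    rw [div_le_one hr0]; linarith
  have hgeo : ∀ jj : ℕ, k + jj ≤ m → d (k + jj) ≤ (5/r)^jj * ε := by
    intro jj
    induction jj with
    | zero =>
      intro _
      have hb := hbound (k+1) (by omega) (by omega)
      simp only [pow_zero, one_mul, hddef, Nat.add_zero]
      have hε' : 0 ≤ ε * s (k+1) := mul_nonneg hε0 hb.1
      have : s (k+1) - s k ≤ ε * s (k+1) := by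
        rw [hεdef]; nlinarith [hfirst]
      calc s (k+1) - s k ≤ ε * s (k+1) := this
        _ ≤ ε * 1 := mul_le_mul_of_nonneg_left hb.2 hε0
        _ = ε := mul_one ε
    | succ jj ih =>
      intro hjm
      have h1 : k + jj ≤ m := by omega
      have hdec := hdecay (k + jj) (by omega) (by omega)
      rw [show k + (jj+1) = (k + jj) + 1 by omega]
      calc d ((k+jj)+1) ≤ 5/r * d (k+jj) := hdec
        _ ≤ 5/r * ((5/r)^jj * ε) := mul_le_mul_of_nonneg_left (ih h1) hx0
        _ = (5/r)^(jj+1) * ε := by ring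
  -- telescoping sum
  have hsum : ∑ i ∈ Finset.range M, d (k + i) = s m - s k := by
    have h := Finset.sum_range_sub (f := fun i => s (k + i)) M
    simp only [Nat.add_zero] at h
    rw [show m = k + M from hmdef]
    rw [← h]
    apply Finset.sum_congr rfl
    intro i _
    simp only [hddef, show k + (i+1) = k + i + 1 by omega]
  have hsum_le : s m - s k ≤ ε * (r / (r - 5)) := by
    rw [← hsum]
    have hterm : ∀ i ∈ Finset.range M, d (k + i) ≤ (5/r)^i * ε := by
      intro i hi
      exact hgeo i (by simp at hi; omega)
    calc ∑ i ∈ Finset.range M, d (k + i) ≤ ∑ i ∈ Finset.range M, (5/r)^i * ε :=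
          Finset.sum_le_sum hterm
      _ = (∑ i ∈ Finset.range M, (5/r)^i) * ε := by rw [Finset.sum_mul]
      _ ≤ (r / (r - 5)) * ε := by
          apply mul_le_mul_of_nonneg_right _ hε0
          have hxlt : (5:ℝ)/r < 1 := by rw [div_lt_one hr0]; linarith
          have hgs : ∑ i ∈ Finset.range M, (5/r)^i = ((5/r)^M - 1)/((5/r) - 1) :=
            geom_sum_eq (ne_of_lt hxlt) M
          rw [hgs]
          have h1 : ((5/r:ℝ)^M - 1)/((5/r) - 1) = (1 - (5/r)^M)/(1 - 5/r) := by
            rw [div_eq_div_iff (by exact ne_of_lt (by linarith)) (by exact ne_of_gt (by linarith))]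
            ring
          rw [h1]
          have hxM : (0:ℝ) ≤ (5/r)^M := by positivity
          calc (1 - (5/r:ℝ)^M)/(1 - 5/r) ≤ 1/(1 - 5/r) :=
                (div_le_div_iff_of_pos_right (by linarith)).mpr (by linarith)
            _ = r/(r-5) := by
                rw [div_eq_div_iff (by linarith) (by linarith)]
                field_simp
      _ = ε * (r / (r - 5)) := mul_comm _ _
  -- tail bound
  set I : ℕ := k + (M - 1) with hIdef
  have hI1 : I + 1 = m := by omega
  have hIR : (I:ℝ) + 1 = (k:ℝ) + (M:ℝ) := by
    have : ((I + 1 : ℕ):ℝ) = ((k + M : ℕ):ℝ) := by rw [hI1, hmdef]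
    push_cast at this
    linarith
  have hIk : (I:ℝ) + 1 - k = (M:ℝ) := by linarith
  have hrelI := hrel I (by omega) (by omega)
  rw [hI1] at hrelI
  have hM0R : (0:ℝ) < (M:ℝ) := by exact_mod_cast hM1
  have hdm : 0 ≤ d m := hd0 m (by omega) (by omega)
  have hmR : ((m:ℕ):ℝ) = (k:ℝ) + M := by rw [hmdef]; push_cast; ring
  have hnmR : ((n:ℝ) - ((I:ℝ) + 1)) ≤ 2 * (M:ℝ) := by
    rw [hIR]
    have : (n:ℝ) ≤ (k:ℝ) + 3 * M := by exact_mod_cast hnk3M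
    linarith
  have hnm0 : (0:ℝ) ≤ (n:ℝ) - ((I:ℝ) + 1) := by
    rw [hIR]
    have : ((m:ℕ):ℝ) ≤ (n:ℝ) := by exact_mod_cast (le_of_lt hmn)
    rw [hmR] at this
    linarith
  have hIm : (I:ℝ) + 1 ≤ (n:ℝ) := by linarith
  have hdI : 0 ≤ d I := hd0 I (by omega) (by omega)
  have htail : 1 - s m ≤ 3 * (n:ℝ) / r * d I := by
    have hsm1 : 0 ≤ 1 - s m := by
      have := (hbound m (by omega) (by omega)).2
      linarith
    have ha0 : 0 ≤ r * ((I:ℝ)+1) * ((n:ℝ) - ((I:ℝ)+1)) :=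
      mul_nonneg (mul_nonneg hr0.le (by positivity)) hnm0
    have hc1 : r * ((I:ℝ) + 1 - k) * (1 - s m)
        ≤ (((I:ℝ) + 1 - k) * n + ((I:ℝ) + 1) * ((n:ℝ) - ((I:ℝ)+1))) * d I := by
      nlinarith [hrelI, mul_nonneg ha0 hdm]
    rw [hIk] at hc1
    have hb3 : ((M:ℝ) * n + ((I:ℝ) + 1) * ((n:ℝ) - ((I:ℝ)+1))) * d I
        ≤ 3 * (n:ℝ) * (M:ℝ) * d I := by
      apply mul_le_mul_of_nonneg_right _ hdI
      nlinarith [mul_le_mul_of_nonneg_left hnmR (by linarith : (0:ℝ) ≤ (I:ℝ) + 1),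
        mul_le_mul_of_nonneg_right hIm (by linarith : (0:ℝ) ≤ 2 * (M:ℝ))]
    have hcomb : r * (M:ℝ) * (1 - s m) ≤ 3 * (n:ℝ) * (M:ℝ) * d I := le_trans hc1 hb3
    rw [div_mul_eq_mul_div, le_div_iff₀ hr0]
    exact le_of_mul_le_mul_right (by linarith [hcomb]) hM0R
  -- the X quantity
  set j : ℕ := M - 1 with hjdef
  have hMj : (M:ℝ) = (j:ℝ) + 1 := by
    have : ((j + 1 : ℕ):ℝ) = ((M:ℕ):ℝ) := by norm_cast; omega
    push_cast at this
    linarith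
  set X : ℝ := (5/r)^j with hXdef
  have hX0 : 0 ≤ X := by positivity
  have hX1 : X ≤ 1 := pow_le_one₀ hx0 hx1
  have hdIX : d I ≤ X * ε := by
    have h := hgeo j (by omega)
    rw [show k + j = I by omega] at h
    exact h
  -- Bernoulli-type bound : (r-5) * X * M ≤ 2 * r
  have hbern : 1 + (j:ℝ) * ((r-5)/r) ≤ (1 + (r-5)/r)^j :=
    one_add_mul_le_pow (le_trans (by norm_num : (-2:ℝ) ≤ 0) (by positivity)) j
  have hq : (5/r) * (1 + (r-5)/r) ≤ 1 := by
    have e : (5/r) * (1 + (r-5)/r) = 5*(2*r-5)/(r*r) := by field_simp; ring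
    rw [e, div_le_one (by positivity)]
    nlinarith [sq_nonneg (r-5)]
  have hXb : X * (1 + (j:ℝ)*((r-5)/r)) ≤ 1 := by
    calc X * (1 + (j:ℝ)*((r-5)/r)) ≤ X * (1 + (r-5)/r)^j :=
          mul_le_mul_of_nonneg_left hbern hX0
      _ = ((5/r) * (1 + (r-5)/r))^j := by rw [hXdef, ← mul_pow]
      _ ≤ 1^j := pow_le_pow_left₀ (by positivity) hq j
      _ = 1 := one_pow j
  have hXb' : X * r + (j:ℝ) * X * (r - 5) ≤ r := by
    have h2 : X * (1 + (j:ℝ)*((r-5)/r)) * r ≤ 1 * r :=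
      mul_le_mul_of_nonneg_right hXb hr0.le
    have h3 : X * (1 + (j:ℝ)*((r-5)/r)) * r = X*r + (j:ℝ)*X*(r-5) := by
      field_simp
    rw [h3] at h2
    linarith
  have hux : (r - 5) * X * (M:ℝ) ≤ 2 * r := by
    rw [hMj]
    nlinarith [hXb', hX0, mul_nonneg hX0 hr0.le]
  -- M lower bound in terms of L
  have hMb : 0.7 * L - 0.5 ≤ (M:ℝ) := by
    have h2M : (n:ℝ) - (k:ℝ) ≤ 2 * (M:ℝ) + 1 := by
      have : n ≤ k + (2 * M + 1) := by omega
      have := (Nat.cast_le (α := ℝ)).mpr this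
      push_cast at this
      linarith
    have hsqk : Real.sqrt ((n:ℝ) * L) ≤ (n:ℝ) - k := by linarith [hkb]
    have hsqL : 1.4 * L ≤ Real.sqrt ((n:ℝ) * L) := by
      rw [show (1.4 : ℝ) * L = Real.sqrt ((1.4 * L)^2) from (Real.sqrt_sq (by positivity)).symm]
      apply Real.sqrt_le_sqrt
      linarith [mul_le_mul_of_nonneg_right hLn2 hL0.le, mul_self_nonneg L]
    linarith
  -- final assembly
  set D : ℝ := (r - 5) * (r - 1) * L with hDdef
  have hD0 : 0 < D := by rw [hDdef]; positivity
  have hfin : 1 - s k ≤ ε * (r/(r-5)) + 3*(n:ℝ)/r * (X * ε) := by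
    have h1 : 1 - s m ≤ 3*(n:ℝ)/r * (X * ε) :=
      le_trans htail (mul_le_mul_of_nonneg_left hdIX (by positivity))
    linarith [hsum_le, h1]
  have hT1 : ε * (r/(r-5)) ≤ 2*r/D := by
    rw [hεdef, hDdef]
    have e1 : (2:ℝ)/((n:ℝ)*(r-1)) * (r/(r-5)) = 2*r/((n:ℝ)*(r-1)*(r-5)) := by
      rw [div_mul_div_comm, mul_assoc]
    rw [e1]
    rw [div_le_div_iff₀ (by positivity) (by positivity)]
    calc 2*r*((r-5)*(r-1)*L) = (2*r*(r-1)*(r-5))*L := by ring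
      _ ≤ (2*r*(r-1)*(r-5))*(n:ℝ) := mul_le_mul_of_nonneg_left hLn (by positivity)
      _ = 2*r*((n:ℝ)*(r-1)*(r-5)) := by ring
  have hT2 : 3*(n:ℝ)/r * (X * ε) ≤ 62*r/D := by
    have e : 3*(n:ℝ)/r * (X * ε) = 6*X/(r*(r-1)) := by
      rw [hεdef]; field_simp; ring
    rw [e, hDdef, div_le_div_iff₀ (by positivity) (by positivity)]
    -- 6 X (r-5)(r-1) L ≤ 62 r (r (r-1))
    have hMpos : (0:ℝ) < (M:ℝ) := hM0R
    apply le_of_mul_le_mul_right _ hMpos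
    have key1 : 6*X*((r-5)*(r-1)*L) * M ≤ 6*(r-1)*L*(2*r) := by
      have h0 := mul_le_mul_of_nonneg_left hux (by positivity : (0:ℝ) ≤ 6*(r-1)*L)
      calc 6*X*((r-5)*(r-1)*L) * M = 6*(r-1)*L*((r-5)*X*(M:ℝ)) := by ring
        _ ≤ 6*(r-1)*L*(2*r) := h0
    have key2 : 6*(r-1)*L*(2*r) ≤ 62*r*(r*(r-1)) * M := by
      have hA : (0:ℝ) ≤ 43.4*L - 31 := by linarith
      have hB : 5*(43.4*L-31) ≤ r*(43.4*L-31) := mul_le_mul_of_nonneg_right hr.le hA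
      have hD : 12*L ≤ 62*r*(0.7*L-0.5) := by linarith [hB]
      have hE : 62*r*(0.7*L-0.5) ≤ 62*r*(M:ℝ) :=
        mul_le_mul_of_nonneg_left hMb (by positivity)
      have hF : 12*L ≤ 62*r*(M:ℝ) := le_trans hD hE
      have hG := mul_le_mul_of_nonneg_left hF (by positivity : (0:ℝ) ≤ r*(r-1))
      calc 6*(r-1)*L*(2*r) = r*(r-1)*(12*L) := by ring
        _ ≤ r*(r-1)*(62*r*(M:ℝ)) := hG
        _ = 62*r*(r*(r-1))*(M:ℝ) := by ring
    linarith [key1, key2]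
  have hfinal : 1 - s k ≤ 64*r/D := by
    have : (2:ℝ)*r/D + 62*r/D = 64*r/D := by ring
    linarith [hfin, hT1, hT2, this]
  rw [ge_iff_le]
  linarith [hfinal]
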